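/- Let f : ℕ → ℤ be a function which takes even values infinitely often and odd values infinitely often, and let k ≥ 2 be an integer. Then there exists a function g : ℕ → ℕ with positive values such that Σ_{n=1}^∞ (−1)^{f(n)} / (g(n) · n^k) = 0. -/

import Mathlib

theorem stmt14 (f : ℕ → ℤ)
    (heven : ∀ N : ℕ, ∃ n, N ≤ n ∧ Even (f n))
    (hodd : ∀ N : ℕ, ∃ n, N ≤ n ∧ Odd (f n))
    (k : ℕ) (hk : 2 ≤ k) :
    ∃ g : ℕ → ℕ, (∀ n, 0 < g n) ∧
      (∑' n : ℕ, ((-1 : ℝ) ^ f (n + 1)) / ((g (n + 1) : ℝ) * (n + 1 : ℝ) ^ k)) = 0 := by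
  classical
  set p : ℕ → Prop := fun n => 1 ≤ n ∧ Even (f n) with hpdef
  set q : ℕ → Prop := fun n => 1 ≤ n ∧ ¬ Even (f n) with hqdef
  have hp : (setOf p).Infinite := by
    apply Set.infinite_of_forall_exists_gt
    intro a
    obtain ⟨n, hn, he⟩ := heven (a + 1)
    exact ⟨n, ⟨by omega, he⟩, by omega⟩
  have hq : (setOf q).Infinite := by
    apply Set.infinite_of_forall_exists_gt
    intro a
    obtain ⟨n, hn, he⟩ := hodd (a + 1)
    exact ⟨n, ⟨by omega, (Int.not_even_iff_odd).mpr he⟩, by omega⟩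
  set T : ℕ → ℕ := fun n =>
    if Even (f n) then Nat.nth q (Nat.count p n) else Nat.nth p (Nat.count q n) with hT
  have hTq : ∀ n, Even (f n) → q (T n) := by
    intro n hn
    simp only [hT, if_pos hn]
    exact Nat.nth_mem_of_infinite hq _
  have hTp : ∀ n, ¬ Even (f n) → p (T n) := by
    intro n hn
    simp only [hT, if_neg hn]
    exact Nat.nth_mem_of_infinite hp _
  have hTpos : ∀ n, 1 ≤ T n := by
    intro n
    by_cases hn : Even (f n)
    · exact (hTq n hn).1
    · exact (hTp n hn).1
  have hTT : ∀ n, 1 ≤ n → T (T n) = n := by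
    intro n hn
    by_cases he : Even (f n)
    · have h1 : T n = Nat.nth q (Nat.count p n) := by simp [hT, if_pos he]
      have h2 : ¬ Even (f (T n)) := (hTq n he).2
      have : T (T n) = Nat.nth p (Nat.count q (T n)) := by
        show (if Even (f (T n)) then Nat.nth q (Nat.count p (T n)) else Nat.nth p (Nat.count q (T n))) = _
        rw [if_neg h2]
      rw [this, h1, Nat.count_nth_of_infinite hq, Nat.nth_count ⟨hn, he⟩]
    · have h1 : T n = Nat.nth p (Nat.count q n) := by simp [hT, if_neg he]
      have h2 : Even (f (T n)) := (hTp n he).2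
      have : T (T n) = Nat.nth q (Nat.count p (T n)) := by
        show (if Even (f (T n)) then Nat.nth q (Nat.count p (T n)) else Nat.nth p (Nat.count q (T n))) = _
        rw [if_pos h2]
      rw [this, h1, Nat.count_nth_of_infinite hp, Nat.nth_count ⟨hn, he⟩]
  set g : ℕ → ℕ := fun n => (T n) ^ k with hg
  refine ⟨g, fun n => pow_pos (hTpos n) k, ?_⟩
  set F : ℕ → ℝ := fun n =>
    ((-1 : ℝ) ^ f (n + 1)) / ((g (n + 1) : ℝ) * (n + 1 : ℝ) ^ k) with hF
  set E : ℕ → ℕ := fun n => T (n + 1) - 1 with hEdef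
  have hEadd : ∀ n, E n + 1 = T (n + 1) := by
    intro n
    have := hTpos (n + 1)
    simp only [hEdef]
    omega
  have hinv : Function.Involutive E := by
    intro n
    have h1 : 1 ≤ T (n + 1) := hTpos (n + 1)
    show T (E n + 1) - 1 = n
    rw [hEadd, hTT (n + 1) (by omega)]
    omega
  let e : ℕ ≃ ℕ := ⟨E, E, hinv, hinv⟩
  have key : ∀ n, F (e n) = - F n := by
    intro n
    have hce : (e n : ℕ) = E n := rfl
    set m := T (n + 1) with hmdef
    have h1 : 1 ≤ m := hTpos (n + 1)
    have hm : (E n : ℕ) + 1 = m := hEadd n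
    have hTm : T m = n + 1 := by rw [hmdef]; exact hTT (n + 1) (by omega)
    have hgm : g m = (n + 1) ^ k := by
      simp only [hg]
      rw [hTm]
    have hgn : g (n + 1) = m ^ k := rfl
    have hden : (g m : ℝ) * (m : ℝ) ^ k = (g (n + 1) : ℝ) * ((n : ℝ) + 1) ^ k := by
      rw [hgm, hgn]
      push_cast
      ring
    have hsign : ((-1 : ℝ) ^ f m) = - ((-1 : ℝ) ^ f (n + 1)) := by
      by_cases he : Even (f (n + 1))
      · have ho : ¬ Even (f m) := (hTq (n + 1) he).2
        rw [he.neg_one_zpow, (Int.not_even_iff_odd.mp ho).neg_one_zpow]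
      · have ho : Even (f m) := (hTp (n + 1) he).2
        rw [ho.neg_one_zpow, (Int.not_even_iff_odd.mp he).neg_one_zpow]
        norm_num
    have hreal : ((E n : ℝ) + 1) = (m : ℝ) := by exact_mod_cast hm
    simp only [hF, hce, hm, hsign]
    rw [hreal, hden]
    ring
  have h0 : (∑' n, F n) = - ∑' n, F n := by
    conv_lhs => rw [← e.tsum_eq F]
    calc (∑' n, F (e n)) = ∑' n, - F n := by simp_rw [key]
    _ = - ∑' n, F n := by rw [tsum_neg]
  have hz : (∑' n, F n) = 0 := by linarith
  simpa [hF] using hz
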